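/- Let w ∈ Sₙ and let a, b ∈ {1,…,n} with a > b. Then there exists a descending path from a to b in Γ_w, i.e. a sequence a = a₀ > a₁ > ⋯ > a_k = b with k ≥ 1 and (a_{i−1}, a_i) ∈ Ref(w) for every 1 ≤ i ≤ k, if and only if (a,b) is an inversion of w, i.e. w⁻¹(a) < w⁻¹(b). -/

import Mathlib

namespace SchubertToric

open Equiv

/-- The number of inversions (= the length `ℓ`) of a permutation. -/
def invCount {n : ℕ} (w : Equiv.Perm (Fin n)) : ℕ :=
  ((Finset.univ : Finset (Fin n × Fin n)).filter fun p => p.1 < p.2 ∧ w p.2 < w p.1).card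

/-- `initSeg w d` is the set `{w(1), …, w(d)}` (0-indexed: images of the first `d` indices). -/
def initSeg {n : ℕ} (w : Equiv.Perm (Fin n)) (d : ℕ) : Finset (Fin n) :=
  (Finset.univ.filter fun i : Fin n => (i : ℕ) < d).image w

/-- `domLE S T`: the increasing rearrangement of `S` is componentwise ≤ that of `T`. -/
def domLE {n : ℕ} (S T : Finset (Fin n)) : Prop :=
  List.Forall₂ (· ≤ ·) (S.sort (· ≤ ·)) (T.sort (· ≤ ·))

/-- Bruhat order on `
Sₙ`, via the tableau criterion. -/
def bruhatLE {n : ℕ} (v w : Equiv.Perm (Fin n)) : Prop :=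
  ∀ d : ℕ, domLE (initSeg v d) (initSeg w d)

/-- `GreedyRel w v vp` says that `vp = v'`, the result of the greedy operation associated
to `w`: there is a sequence of indices `idx 0, idx 1, …`, each chosen as the *least* index
not previously chosen such that the increasing rearrangement of the previously chosen values
together with the new value is componentwise at most `{w(1),…,w(d)}`, and `vp d = v (idx d)`. -/
def GreedyRel {n : ℕ} (w v vp : Equiv.Perm (Fin n)) : Prop :=
  ∃ idx : Fin n → Fin n,
    (∀ d : Fin n, vp d = v (idx d)) ∧
    ∀ d : Fin n,
      IsLeast {i : Fin n |
        (∀ e : Fin n, e < d → idx e ≠ i) ∧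
        domLE (insert (v i)
            ((Finset.univ.filter fun e : Fin n => e < d).image fun e => v (idx e)))
          (initSeg w ((d : ℕ) + 1))}
        (idx d)

/-- Right weak order: `rightWeakLE u v` iff `v = u·s_{i₁}⋯s_{i_k}` with
`ℓ(u·s_{i₁}⋯s_{i_j}) = ℓ(u) + j` for all `0 ≤ j ≤ k`. -/
def rightWeakLE {n : ℕ} (u v : Equiv.Perm (Fin n)) : Prop :=
  ∃ L : List (Equiv.Perm (Fin n)),
    (∀ s ∈ L, ∃ (i : Fin n) (h : (i : ℕ) + 1 < n), s = Equiv.swap i ⟨(i : ℕ) + 1, h⟩) ∧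
    v = u * L.prod ∧
    ∀ k ≤ L.length, invCount (u * (L.take k).prod) = invCount u + k

/-- `Ref(w) = {(w(i),w(j)) : i < j, ℓ(w) − ℓ(t_{w(i),w(j)}·w) = 1}`. -/
def RefSet {n : ℕ} (w : Equiv.Perm (Fin n)) : Set (Fin n × Fin n) :=
  {p | ∃ i j : Fin n, i < j ∧ p = (w i, w j) ∧
    invCount (Equiv.swap (w i) (w j) * w) + 1 = invCount w}

/-- The (undirected) graph `Γ_w` on `Fin n` whose edges are the pairs in `Ref(w)`. -/
def refGraph {n : ℕ} (w : Equiv.Perm (Fin n)) : SimpleGraph (Fin n) :=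
  SimpleGraph.fromRel fun a b => (a, b) ∈ RefSet w

/-- The vertices of `Γ_w`: the integers occurring in pairs of `Ref(w)`. -/
def refVerts {n : ℕ} (w : Equiv.Perm (Fin n)) : Set (Fin n) :=
  {a | ∃ b, (a, b) ∈ RefSet w ∨ (b, a) ∈ RefSet w}

/-- The cone `C(v) = {x ∈ ℝⁿ : x_{v(1)} ≤ x_{v(2)} ≤ ⋯ ≤ x_{v(n)}}`. -/
def coneC {n : ℕ} (v : Equiv.Perm (Fin n)) : Set (Fin n → ℝ) :=
  {x | ∀ i j : Fin n, i ≤ j → x (v i) ≤ x (v j)}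

/-- `Ẽ_w(u) = {(u(i),u(j)) : i < j, t_{u(i),u(j)}·u ≤ w, |ℓ(u) − ℓ(t_{u(i),u(j)}·u)| = 1}`. -/
def Etil {n : ℕ} (w u : Equiv.Perm (Fin n)) : Set (Fin n × Fin n) :=
  {p | ∃ i j : Fin n, i < j ∧ p = (u i, u j) ∧
    bruhatLE (Equiv.swap (u i) (u j) * u) w ∧
    (invCount (Equiv.swap (u i) (u j) * u) + 1 = invCount u ∨
      invCount u + 1 = invCount (Equiv.swap (u i) (u j) * u))}

/-- An element `p = (a,b)` of `Ẽ_w(u)` is decomposable if it is a sum (under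
`(a,b)+(b,c) = (a,c)`) of two or more other elements of `Ẽ_w(u)`. -/
def Decomposable {n : ℕ} (w u : Equiv.Perm (Fin n)) (p : Fin n × Fin n) : Prop :=
  ∃ (m : ℕ) (c : ℕ → Fin n), 2 ≤ m ∧ c 0 = p.1 ∧ c m = p.2 ∧
    ∀ i < m, (c i, c (i + 1)) ∈ Etil w u ∧ (c i, c (i + 1)) ≠ p

/-- `E_w(u)`: the indecomposable elements of `Ẽ_w(u)`. -/
def Ew {n : ℕ} (w u : Equiv.Perm (Fin n)) : Set (Fin n × Fin n) :=
  {p | p ∈ Etil w u ∧ ¬ Decomposable w u p}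

/-- The longest element `w₀ = n(n−1)⋯21` of `Sₙ`. -/
def w0 {n : ℕ} : Equiv.Perm (Fin n) :=
  Function.Involutive.toPerm Fin.rev Fin.rev_rev

private def gmap (i j : Fin n) (p : Fin n × Fin n) : Fin n × Fin n :=
  (if p.1 = i ∧ j < p.2 then j else if p.1 = j then i else p.1,
   if p.2 = i then j else if p.2 = j ∧ p.1 < i then i else p.2)

theorem key {w : Equiv.Perm (Fin n)} {i j : Fin n} (hij : i < j)
    (hmid : ∀ k : Fin n, i < k → k < j → w k < w j ∨ w i < w k)
    (hw : w j < w i) :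
    invCount (Equiv.swap (w i) (w j) * w) + 1 = invCount w := by
  set w' := Equiv.swap (w i) (w j) * w with hw'def
  have hne : i ≠ j := ne_of_lt hij
  have hw'i : w' i = w j := by simp [hw'def]
  have hw'j : w' j = w i := by simp [hw'def]
  have hw'k : ∀ k : Fin n, k ≠ i → k ≠ j → w' k = w k := by
    intro k hki hkj
    show Equiv.swap (w i) (w j) (w k) = w k
    exact Equiv.swap_apply_of_ne_of_ne (fun h => hki (w.injective h))
      (fun h => hkj (w.injective h))
  have gprop : ∀ p : Fin n × Fin n, p.1 < p.2 → p ≠ (i, j) →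
      (gmap i j p).1 < (gmap i j p).2 ∧ gmap i j p ≠ (i, j) ∧
      gmap i j (gmap i j p) = p ∧
      (w' p.2 < w' p.1 ↔ w (gmap i j p).2 < w (gmap i j p).1) := by
    rintro ⟨p1, p2⟩ hplt hpne
    simp only [ne_eq, Prod.mk.injEq, not_and] at hpne
    by_cases h1i : p1 = i
    · subst h1i
      have h2j : p2 ≠ j := hpne rfl
      rcases lt_or_gt_of_ne h2j with h2 | h2
      · -- i < p2 < j : g p = (p1, p2)
        have hgp : gmap p1 j (p1, p2) = (p1, p2) := by
          simp [gmap, hne, not_lt.2 h2.le, hplt.ne', h2j]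
        refine ⟨by rw [hgp]; exact hplt, by rw [hgp]; simp [h2j], by rw [hgp, hgp], ?_⟩
        rw [hgp, hw'i, hw'k p2 hplt.ne' h2j]
        rcases hmid p2 hplt h2 with h | h
        · exact iff_of_true h (h.trans hw)
        · exact iff_of_false (asymm (hw.trans h)) (asymm h)
      · -- p2 > j : g p = (j, p2)
        have h2i : p2 ≠ p1 := hplt.ne'
        have hgp : gmap p1 j (p1, p2) = (j, p2) := by
          simp [gmap, h2, h2i, h2j]
        have hggp : gmap p1 j (j, p2) = (p1, p2) := by
          simp [gmap, hne.symm, h2i, h2j, not_lt.2 hij.le]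
        refine ⟨by rw [hgp]; exact h2, by rw [hgp]; simp [hne.symm], by rw [hgp, hggp], ?_⟩
        rw [hgp, hw'i, hw'k p2 h2i h2j]
    · by_cases h1j : p1 = j
      · subst h1j
        have h2j : p2 ≠ p1 := hplt.ne'
        have h2i : p2 ≠ i := ne_of_gt (hij.trans hplt)
        have hgp : gmap i p1 (p1, p2) = (i, p2) := by
          simp [gmap, fun h : p1 = i => h1i h, h2i, h2j, not_lt.2 hij.le]
        have hggp : gmap i p1 (i, p2) = (p1, p2) := by
          simp [gmap, hplt, h2i, h2j]
        refine ⟨by rw [hgp]; exact hij.trans hplt, by rw [hgp]; simp [h2j],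
          by rw [hgp, hggp], ?_⟩
        rw [hgp, hw'j, hw'k p2 h2i h2j]
      · -- p1 ∉ {i, j}
        by_cases h2i : p2 = i
        · subst h2i
          have h1lt : p1 < p2 := hplt
          have hgp : gmap p2 j (p1, p2) = (p1, j) := by
            simp [gmap, h1i, h1j]
          have hggp : gmap p2 j (p1, j) = (p1, p2) := by
            simp [gmap, h1i, h1j, hne.symm, hplt, lt_irrefl]
          refine ⟨by rw [hgp]; exact hplt.trans hij, by rw [hgp]; simp [h1i],
            by rw [hgp, hggp], ?_⟩
          rw [hgp, hw'i, hw'k p1 h1i h1j]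
        · by_cases h2j : p2 = j
          · subst h2j
            rcases lt_or_gt_of_ne h1i with h1 | h1
            · -- p1 < i : g p = (p1, i)
              have hgp : gmap i p2 (p1, p2) = (p1, i) := by
                simp [gmap, h1i, h1j, h1, h2i]
              have hggp : gmap i p2 (p1, i) = (p1, p2) := by
                simp [gmap, h1i, h1j]
              refine ⟨by rw [hgp]; exact h1, by rw [hgp]; simp [h1i],
                by rw [hgp, hggp], ?_⟩
              rw [hgp, hw'j, hw'k p1 h1i h1j]
            · -- i < p1 < j : g p = (p1, p2)
              have hgp : gmap i p2 (p1, p2) = (p1, p2) := by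
                simp [gmap, h1i, h1j, h2i, not_lt.2 h1.le]
              refine ⟨by rw [hgp]; exact hplt, by rw [hgp]; simp [h1i],
                by rw [hgp, hgp], ?_⟩
              rw [hgp, hw'j, hw'k p1 h1i h1j]
              rcases hmid p1 h1 hplt with h | h
              · exact iff_of_false (asymm (h.trans hw)) (asymm h)
              · exact iff_of_true h (hw.trans h)
          · -- generic : g p = p
            have hgp : gmap i j (p1, p2) = (p1, p2) := by
              simp [gmap, h1i, h1j, h2i, h2j]
            refine ⟨by rw [hgp]; exact hplt, by rw [hgp]; simp [h2j],
              by rw [hgp, hgp], ?_⟩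
            rw [hgp, hw'k p1 h1i h1j, hw'k p2 h2i h2j]
  have hijmem : (i, j) ∈ (Finset.univ.filter
      fun p : Fin n × Fin n => p.1 < p.2 ∧ w p.2 < w p.1) := by
    simp [hij, hw]
  have hcard : (Finset.univ.filter
        fun p : Fin n × Fin n => p.1 < p.2 ∧ w' p.2 < w' p.1).card =
      ((Finset.univ.filter
        fun p : Fin n × Fin n => p.1 < p.2 ∧ w p.2 < w p.1).erase (i, j)).card := by
    refine Finset.card_nbij' (gmap i j) (gmap i j) ?_ ?_ ?_ ?_
    · intro p hp
      rw [Finset.mem_coe, Finset.mem_filter] at hp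
      obtain ⟨-, hlt, hinv⟩ := hp
      have hne' : p ≠ (i, j) := by
        rintro rfl
        rw [show ((i : Fin n), j).1 = i from rfl, show ((i : Fin n), j).2 = j from rfl,
          hw'i, hw'j] at hinv
        exact absurd hinv (asymm hw)
      obtain ⟨hg1, hg2, hg3, hg4⟩ := gprop p hlt hne'
      exact Finset.mem_erase.2 ⟨hg2, Finset.mem_filter.2
        ⟨Finset.mem_univ _, hg1, hg4.mp hinv⟩⟩
    · intro q hq
      rw [Finset.mem_coe, Finset.mem_erase, Finset.mem_filter] at hq
      obtain ⟨hqne, -, hqlt, hqinv⟩ := hq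
      obtain ⟨hg1, hg2, hg3, hg4⟩ := gprop q hqlt hqne
      obtain ⟨-, -, -, hg4'⟩ := gprop (gmap i j q) hg1 hg2
      rw [hg3] at hg4'
      exact Finset.mem_filter.2 ⟨Finset.mem_univ _, hg1, hg4'.mpr hqinv⟩
    · intro p hp
      rw [Finset.mem_coe, Finset.mem_filter] at hp
      obtain ⟨-, hlt, hinv⟩ := hp
      have hne' : p ≠ (i, j) := by
        rintro rfl
        rw [show ((i : Fin n), j).1 = i from rfl, show ((i : Fin n), j).2 = j from rfl,
          hw'i, hw'j] at hinv
        exact absurd hinv (asymm hw)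
      exact (gprop p hlt hne').2.2.1
    · intro q hq
      rw [Finset.mem_coe, Finset.mem_erase, Finset.mem_filter] at hq
      obtain ⟨hqne, -, hqlt, hqinv⟩ := hq
      exact (gprop q hqlt hqne).2.2.1
  show (Finset.univ.filter
      fun p : Fin n × Fin n => p.1 < p.2 ∧ w' p.2 < w' p.1).card + 1 = _
  rw [hcard, Finset.card_erase_add_one hijmem]
  rfl

/-- Descending path predicate, matching the theorem statement. -/
private def DPath (w : Equiv.Perm (Fin n)) (a b : Fin n) : Prop :=
  ∃ (k : ℕ) (c : ℕ → Fin n), 1 ≤ k ∧ c 0 = a ∧ c k = b ∧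
    (∀ i < k, c (i + 1) < c i) ∧ (∀ i < k, (c i, c (i + 1)) ∈ RefSet w)

private lemma dpath_trans {w : Equiv.Perm (Fin n)} {a m b : Fin n}
    (h1 : DPath w a m) (h2 : DPath w m b) : DPath w a b := by
  obtain ⟨k1, c1, hk1, hc10, hc1k, hd1, he1⟩ := h1
  obtain ⟨k2, c2, hk2, hc20, hc2k, hd2, he2⟩ := h2
  refine ⟨k1 + k2, fun i => if i < k1 then c1 i else c2 (i - k1), by omega, ?_, ?_, ?_, ?_⟩
  · simp only [if_pos (by omega : 0 < k1)]; exact hc10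
  · simp only [if_neg (by omega : ¬ k1 + k2 < k1)]
    rw [show k1 + k2 - k1 = k2 by omega]; exact hc2k
  · intro i hi
    by_cases h : i + 1 < k1
    · simp only [if_pos h, if_pos (by omega : i < k1)]
      exact hd1 i (by omega)
    · by_cases h' : i < k1
      · have hik : i + 1 = k1 := by omega
        simp only [if_neg h, if_pos h']
        rw [show i + 1 - k1 = 0 by omega, hc20, ← hc1k, ← hik]
        exact hd1 i (by omega)
      · simp only [if_neg h, if_neg h']
        rw [show i + 1 - k1 = (i - k1) + 1 by omega]
        exact hd2 (i - k1) (by omega)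
  · intro i hi
    by_cases h : i + 1 < k1
    · simp only [if_pos h, if_pos (by omega : i < k1)]
      exact he1 i (by omega)
    · by_cases h' : i < k1
      · have hik : i + 1 = k1 := by omega
        simp only [if_neg h, if_pos h']
        rw [show i + 1 - k1 = 0 by omega, hc20, ← hc1k, ← hik]
        exact he1 i (by omega)
      · simp only [if_neg h, if_neg h']
        rw [show i + 1 - k1 = (i - k1) + 1 by omega]
        exact he2 (i - k1) (by omega)

private lemma exists_dpath (w : Equiv.Perm (Fin n)) :
    ∀ N : ℕ, ∀ a b : Fin n, (a : ℕ) ≤ (b : ℕ) + N → b < a → w.symm a < w.symm b →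
      DPath w a b := by
  intro N
  induction N with
  | zero =>
    intro a b hN hba _
    exact absurd hba (by rw [Fin.lt_def]; omega)
  | succ N ih =>
    intro a b hN hba hsym
    by_cases hex : ∃ k : Fin n, w.symm a < k ∧ k < w.symm b ∧ b < w k ∧ w k < a
    · obtain ⟨k, hk1, hk2, hk3, hk4⟩ := hex
      have h3 : (b : ℕ) < (w k : ℕ) := hk3
      have h4 : ((w k : ℕ)) < (a : ℕ) := hk4
      have p1 : DPath w a (w k) := ih a (w k) (by omega) hk4
        (by rw [Equiv.symm_apply_apply]; exact hk1)
      have p2 : DPath w (w k) b := ih (w k) b (by omega) hk3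
        (by rw [Equiv.symm_apply_apply]; exact hk2)
      exact dpath_trans p1 p2
    · push_neg at hex
      have hmid : ∀ k : Fin n, w.symm a < k → k < w.symm b →
          w k < w (w.symm b) ∨ w (w.symm a) < w k := by
        intro k hk1 hk2
        rw [Equiv.apply_symm_apply, Equiv.apply_symm_apply]
        rcases lt_trichotomy (w k) b with h | h | h
        · exact Or.inl h
        · exact absurd (congrArg w.symm h)
            (by rw [Equiv.symm_apply_apply]; exact fun hh => (ne_of_lt hk2) hh)
        · have := hex k hk1 hk2 h
          rcases lt_trichotomy (w k) a with h' | h' | h'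
          · exact absurd h' (not_lt.2 this)
          · exact absurd (congrArg w.symm h')
              (by rw [Equiv.symm_apply_apply]; exact fun hh => (ne_of_gt hk1) hh)
          · exact Or.inr h'
      have href : (a, b) ∈ RefSet w := by
        refine ⟨w.symm a, w.symm b, hsym, by simp, ?_⟩
        exact key hsym hmid
          (by rw [Equiv.apply_symm_apply, Equiv.apply_symm_apply]; exact hba)
      exact ⟨1, fun i => if i = 0 then a else b, le_refl 1, by simp, by simp, fun i hi => by
          interval_cases i; simpa using hba,
        fun i hi => by interval_cases i; simpa using href⟩

/-- For `a > b`, there is a descending path from `a` to `b` in `Γ_w`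
(a sequence `a = a₀ > a₁ > ⋯ > a_k = b`, `k ≥ 1`, with `(a_{i−1}, a_i) ∈ Ref(w)`) iff
`(a,b)` is an inversion of `w`, i.e. `w⁻¹(a) < w⁻¹(b)`. -/
theorem descending_path_iff_inversion {n : ℕ} (w : Equiv.Perm (Fin n))
    (a b : Fin n) (hba : b < a) :
    (∃ (k : ℕ) (c : ℕ → Fin n), 1 ≤ k ∧ c 0 = a ∧ c k = b ∧
        (∀ i < k, c (i + 1) < c i) ∧ (∀ i < k, (c i, c (i + 1)) ∈ RefSet w)) ↔
      w.symm a < w.symm b := by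

  constructor
  · rintro ⟨k, c, hk, hc0, hck, -, href⟩
    have step : ∀ i < k, w.symm (c i) < w.symm (c (i + 1)) := by
      intro i hi
      obtain ⟨p, q, hpq, heq, -⟩ := href i hi
      have h1 : c i = w p := (Prod.mk.injEq _ _ _ _ ▸ heq).1
      have h2 : c (i + 1) = w q := (Prod.mk.injEq _ _ _ _ ▸ heq).2
      rw [h1, h2, Equiv.symm_apply_apply, Equiv.symm_apply_apply]
      exact hpq
    have mono : ∀ i ≤ k, 1 ≤ i → w.symm (c 0) < w.symm (c i) := by
      intro i
      induction i with
      | zero => omega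
      | succ m ihm =>
        intro hm _
        rcases Nat.eq_zero_or_pos m with rfl | hm0
        · exact step 0 (by omega)
        · exact (ihm (by omega) hm0).trans (step m (by omega))
    have := mono k (le_refl k) hk
    rwa [hc0, hck] at this
  · intro h
    exact exists_dpath w (a : ℕ) a b (by omega) hba h
end SchubertToric
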